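/- arXiv:1206.5094 — 4 statements merged into one kernel-verified Lean document; each statement's English description precedes it below -/
import Mathlib

section
/- Let n be an odd natural number and let z : ZMod n → ℂ be a function with each z i a fourth root of unity (i.e. z i ∈ {1, -1, i, -i}). Then it is impossible that for all i, (z i)^2 * (z (i+2))^2 = - (z (i+1))^2 * (z (i+3))^2. -/
theorem stmt_0 (n : ℕ) (hn : Odd n) (z : ZMod n → ℂ)
    (hz : ∀ i, z i ∈ ({1, -1, Complex.I, -Complex.I} : Set ℂ)) :
    ¬ (∀ i : ZMod n, (z i) ^ 2 * (z (i + 2)) ^ 2 = -((z (i + 1)) ^ 2 * (z (i + 3)) ^ 2)) := by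
  intro h
  haveI : NeZero n := ⟨hn.pos.ne'⟩
  set w : ZMod n → ℂ := fun i => (z i) ^ 2 with hw
  have hwne : ∀ i, w i ≠ 0 := by
    intro i
    rcases hz i with h1 | h1 | h1 | h1 <;> (try rw [Set.mem_singleton_iff] at h1) <;>
      simp [hw, h1, Complex.I_ne_zero]
  have hshift : ∀ c : ZMod n, (∏ i, w (i + c)) = ∏ i, w i :=
    fun c => Fintype.prod_equiv (Equiv.addRight c) _ _ (fun i => rfl)
  have hprod : (∏ i, w i * w (i + 2)) = ∏ i : ZMod n, -(w (i + 1) * w (i + 3)) :=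
    Finset.prod_congr rfl (fun i _ => h i)
  rw [Finset.prod_mul_distrib, hshift] at hprod
  have hneg : (∏ x : ZMod n, -(w (x + 1) * w (x + 3)))
      = (-1 : ℂ) ^ n * ∏ x : ZMod n, w (x + 1) * w (x + 3) := by
    rw [Finset.prod_congr rfl (fun x _ => (neg_one_mul (w (x + 1) * w (x + 3))).symm),
      Finset.prod_mul_distrib, Finset.prod_const, Finset.card_univ, ZMod.card]
  rw [hneg, Odd.neg_one_pow hn, Finset.prod_mul_distrib, hshift, hshift, neg_one_mul] at hprod
  have hP : (∏ i, w i) ≠ 0 := Finset.prod_ne_zero_iff.mpr (fun i _ => hwne i)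
  have h2 := mul_ne_zero hP hP
  have h3 : (2:ℂ) * ((∏ i, w i) * ∏ i, w i) = 0 := by linear_combination hprod
  simp [h2] at h3
end

section
/- Let n be odd and let w : ZMod n → ℂ be a function with |w i| = 1 for all i, satisfying w i * w (i+2) = - (w (i+1)) * (w (i+3)) for all i ∈ ZMod n. Then no such w exists (the hypotheses are contradictory). -/
theorem stmt_1 (n : ℕ) (hn : Odd n) :
    ¬ ∃ w : ZMod n → ℂ, (∀ i, ‖w i‖ = 1) ∧
      (∀ i : ZMod n, w i * w (i + 2) = -(w (i + 1) * w (i + 3))) := by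
  rintro ⟨w, habs, hrel⟩
  set f : ZMod n → ℂ := fun i => w i * w (i + 2) with hf
  have hstep : ∀ i, f i = - f (i + 1) := by
    intro i
    have : (i + 1) + 2 = i + 3 := by ring
    simp only [hf, this]
    exact hrel i
  have key : ∀ k : ℕ, ∀ i, f i = (-1 : ℂ) ^ k * f (i + k) := by
    intro k
    induction k with
    | zero => simp
    | succ k ih =>
      intro i
      have h1 : f i = - f (i + 1) := hstep i
      rw [h1, ih (i + 1)]
      have : (i + 1) + (k : ZMod n) = i + ((k : ℕ) + 1 : ℕ) := by push_cast; ring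
      rw [this]
      ring
  have h0 : f 0 = -(f 0) := by
    have := key n 0
    rw [ZMod.natCast_self, add_zero, Odd.neg_one_pow hn] at this
    linear_combination this
  have hz : f 0 = 0 := by
    linear_combination h0 / 2
  have : ‖f 0‖ = 1 := by
    simp [hf, map_mul, habs]
  rw [hz] at this
  simp at this
end

section
/- In the real Clifford algebra Cl(n) of the standard positive definite quadratic form on ℝⁿ (n odd, n ≥ 3), let a = ∏_{k ≠ i} e_k and b = ∏_{k ≠ j} e_k be the ordered products of the standard generators omitting index i and index j respectively, with i ≠ j. Then a * b = - b * a. -/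
/-- The standard positive definite quadratic form on `ℝⁿ`. -/
noncomputable def stdQF (n : ℕ) : QuadraticForm ℝ (Fin n → ℝ) :=
  QuadraticMap.weightedSumSquares ℝ (fun _ : Fin n => (1 : ℝ))

/-- The standard generators `e k` of the Clifford algebra `Cl(n)`. -/
noncomputable def cliffGen (n : ℕ) (k : Fin n) : CliffordAlgebra (stdQF n) :=
  CliffordAlgebra.ι (stdQF n) (Pi.single k 1)

/-- The ordered product `∏_{k ≠ i} e_k` of the standard generators, omitting `i`. -/
noncomputable def omitProd (n : ℕ) (i : Fin n) : CliffordAlgebra (stdQF n) :=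
  (((List.finRange n).filter (fun k => k ≠ i)).map (cliffGen n)).prod

lemma gen_anticomm (n : ℕ) (k l : Fin n) (h : k ≠ l) :
    cliffGen n k * cliffGen n l = -(cliffGen n l * cliffGen n k) := by
  have H := CliffordAlgebra.ι_mul_ι_add_swap (Q := stdQF n) (Pi.single k (1:ℝ)) (Pi.single l 1)
  have hp : QuadraticMap.polar (stdQF n) (Pi.single k (1:ℝ)) (Pi.single l 1) = 0 := by
    simp only [QuadraticMap.polar, stdQF, QuadraticMap.weightedSumSquares_apply, Pi.single_apply,
      one_mul, Pi.add_apply]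
    rw [Finset.sum_congr rfl (g := fun x => (if x = k then (1:ℝ) else 0) + if x = l then 1 else 0) ?_]
    · simp [Finset.sum_add_distrib, Finset.sum_ite_eq', h, h.symm]
    · intro x _
      by_cases hxk : x = k <;> by_cases hxl : x = l <;> simp_all
  rw [hp] at H
  simp only [map_zero] at H
  exact eq_neg_of_add_eq_zero_left H

lemma sign_comm {A : Type*} [Ring A] (c : ℕ) (x : A) : (-1)^c * x = x * (-1)^c :=
  ((Commute.neg_one_left x).pow_left c).eq

lemma sign_mid {A : Type*} [Ring A] (c : ℕ) (x y : A) :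
    x * ((-1)^c * y) = (-1)^c * (x * y) := by
  rw [← mul_assoc, ← sign_comm, mul_assoc]

/-- Move a single generator past a product of generators. -/
lemma gen_mul_prod (n : ℕ) (m : Fin n) (L : List (Fin n)) :
    cliffGen n m * (L.map (cliffGen n)).prod =
      (-1 : CliffordAlgebra (stdQF n)) ^ (L.countP (fun k => k ≠ m)) *
        ((L.map (cliffGen n)).prod * cliffGen n m) := by
  induction L with
  | nil => simp
  | cons l rest ih =>
    simp only [List.map_cons, List.prod_cons, List.countP_cons]
    set P := (rest.map (cliffGen n)).prod
    set c := rest.countP (fun k => k ≠ m)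
    by_cases hl : l = m
    · subst hl
      simp only [ne_eq, not_true_eq_false, decide_false, if_false, add_zero]
      calc cliffGen n l * (cliffGen n l * P)
          = cliffGen n l * ((-1)^c * (P * cliffGen n l)) := by rw [ih]
        _ = (-1)^c * (cliffGen n l * P * cliffGen n l) := by
            rw [sign_mid, mul_assoc]
    · have hd : (decide (l ≠ m)) = true := by simp [hl]
      rw [hd, if_pos rfl]
      calc cliffGen n m * (cliffGen n l * P)
          = (cliffGen n m * cliffGen n l) * P := by rw [mul_assoc]
        _ = -(cliffGen n l * (cliffGen n m * P)) := by
            rw [gen_anticomm n m l (fun h => hl h.symm), neg_mul, mul_assoc]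
        _ = -(cliffGen n l * ((-1)^c * (P * cliffGen n m))) := by rw [ih]
        _ = (-1)^(c+1) * (cliffGen n l * P * cliffGen n m) := by
            rw [sign_mid, pow_succ, mul_assoc]
            simp [mul_assoc]

/-- Swap two products of generators. -/
lemma prod_mul_prod (n : ℕ) (L M : List (Fin n)) :
    (L.map (cliffGen n)).prod * (M.map (cliffGen n)).prod =
      (-1 : CliffordAlgebra (stdQF n)) ^ ((M.map (fun m => L.countP (fun k => k ≠ m))).sum) *
        ((M.map (cliffGen n)).prod * (L.map (cliffGen n)).prod) := by
  induction M with
  | nil => simp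
  | cons m rest ih =>
    simp only [List.map_cons, List.prod_cons, List.sum_cons]
    set P := (L.map (cliffGen n)).prod
    set R := (rest.map (cliffGen n)).prod
    set c := L.countP (fun k => k ≠ m)
    set s := (rest.map (fun m => L.countP (fun k => k ≠ m))).sum
    have h1 : P * cliffGen n m = (-1)^c * (cliffGen n m * P) := by
      rw [gen_mul_prod, ← mul_assoc, ← pow_add, ← two_mul]
      simp [pow_mul]
      rfl
    calc P * (cliffGen n m * R)
        = (P * cliffGen n m) * R := by rw [mul_assoc]
      _ = (-1)^c * (cliffGen n m * (P * R)) := by rw [h1, mul_assoc, mul_assoc]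
      _ = (-1)^c * (cliffGen n m * ((-1)^s * (R * P))) := by rw [ih]
      _ = (-1)^(c + s) * (cliffGen n m * R * P) := by
          rw [sign_mid, pow_add, mul_assoc ((-1:CliffordAlgebra (stdQF n))^c), mul_assoc]

lemma countP_omit (n : ℕ) (i m : Fin n) :
    ((List.finRange n).filter (fun k => k ≠ i)).countP (fun k => k ≠ m) =
      if m = i then n - 1 else n - 2 := by
  rw [List.countP_eq_length_filter, List.filter_filter]
  have hnd : (((List.finRange n).filter (fun k => decide (k ≠ m) && decide (k ≠ i)))).Nodup :=
    (List.nodup_finRange n).filter _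
  rw [← List.toFinset_card_of_nodup hnd, List.toFinset_filter, List.toFinset_finRange]
  by_cases hmi : m = i
  · subst hmi
    rw [if_pos rfl]
    have : (Finset.univ.filter (fun k : Fin n => decide (k ≠ m) && decide (k ≠ m))) =
        Finset.univ.erase m := by
      ext x; simp [Finset.mem_erase, and_comm]
    rw [this, Finset.card_erase_of_mem (Finset.mem_univ m), Finset.card_univ, Fintype.card_fin]
  · rw [if_neg hmi]
    have : (Finset.univ.filter (fun k : Fin n => decide (k ≠ m) && decide (k ≠ i))) =
        (Finset.univ.erase i).erase m := by
      ext x; simp [Finset.mem_erase, and_comm]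
    rw [this, Finset.card_erase_of_mem (Finset.mem_erase.2 ⟨hmi, Finset.mem_univ m⟩),
      Finset.card_erase_of_mem (Finset.mem_univ i), Finset.card_univ, Fintype.card_fin]
    omega

lemma exponent_odd (n : ℕ) (hn : Odd n) (h3 : 3 ≤ n) (i j : Fin n) (hij : i ≠ j) :
    Odd ((((List.finRange n).filter (fun k => k ≠ j)).map
      (fun m => ((List.finRange n).filter (fun k => k ≠ i)).countP (fun k => k ≠ m))).sum) := by
  set M := (List.finRange n).filter (fun k => k ≠ j) with hM
  have hnd : M.Nodup := (List.nodup_finRange n).filter _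
  have hMf : M.toFinset = Finset.univ.erase j := by
    rw [hM, List.toFinset_filter, List.toFinset_finRange]
    ext x; simp [Finset.mem_erase]
  rw [← List.sum_toFinset _ hnd, hMf]
  have hsum : ∑ m ∈ Finset.univ.erase j,
      ((List.finRange n).filter (fun k => k ≠ i)).countP (fun k => k ≠ m)
      = (n-1) + (n-2) * (n-2) := by
    have hi : i ∈ Finset.univ.erase j := Finset.mem_erase.2 ⟨hij, Finset.mem_univ i⟩
    rw [← Finset.add_sum_erase _ _ hi, countP_omit, if_pos rfl]
    congr 1
    rw [Finset.sum_congr rfl (g := fun _ => n - 2)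
        (fun x hx => by rw [countP_omit, if_neg (Finset.mem_erase.1 hx).1]),
      Finset.sum_const, smul_eq_mul,
      Finset.card_erase_of_mem hi, Finset.card_erase_of_mem (Finset.mem_univ j),
      Finset.card_univ, Fintype.card_fin]
    have h11 : n - 1 - 1 = n - 2 := by omega
    rw [h11]
  rw [hsum]
  obtain ⟨t, ht⟩ := hn
  have h1 : Even (n - 1) := ⟨t, by omega⟩
  have h2 : Odd (n - 2) := ⟨t - 1, by omega⟩
  exact h1.add_odd (h2.mul h2)

theorem stmt_11 (n : ℕ) (hn : Odd n) (h3 : 3 ≤ n) (i j : Fin n) (hij : i ≠ j) :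
    omitProd n i * omitProd n j = -(omitProd n j * omitProd n i) := by
  rw [omitProd, omitProd, prod_mul_prod,
    Odd.neg_one_pow (exponent_odd n hn h3 i j hij), neg_one_mul]
end

section
/- Let Γ be a group generated by elements β_1, ..., β_n together with a central-free abelian setup as follows: β_i = (B_i, b_i) ∈ O(n) ⋉ ℝⁿ where B_i is diagonal with +1 only in position i and b_i = (0,...,0,1/2,1/2,0,...,0) (the 1/2's in positions i, i+1 mod n), for 1 ≤ i ≤ n−1, and β_n = (β_1⋯β_{n−1})^{−1}. Then for each i, (β_i)² is the translation t_i by the i-th standard basis vector, and (β_i β_{i+2})² is the translation t_{i+1} t_{i+3}^{−1} (indices mod n). -/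
/-- The affine transformation of `ℝⁿ` (with coordinates indexed mod `n`) given by
the pair `(diag B, s)` in `O(n) ⋉ ℝⁿ`, acting by `x ↦ (diag B) x + s`. -/
def hwAffZ (n : ℕ) (B s : ZMod n → ℝ) : (ZMod n → ℝ) → (ZMod n → ℝ) :=
  fun x j => B j * x j + s j

namespace HWaux

/-- diagonal part of `β₁ ⋯ βₘ` -/
noncomputable def Dfun (n m : ℕ) : ZMod n → ℝ :=
  fun j => if j.val ≠ 0 ∧ j.val ≤ m then (-1)^(m+1) else (-1)^m

/-- translation part of `β₁ ⋯ βₘ` -/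
noncomputable def cfun (n m : ℕ) : ZMod n → ℝ :=
  fun j =>
    if j.val = 0 ∧ m = n - 1 then -(1/2)
    else if j.val = 1 ∧ 1 ≤ m then 1/2
    else if 2 ≤ j.val ∧ j.val = m + 1 then (-1)^(m+1)/2
    else 0

lemma foldr_comp {α : Type*} (l : List (α → α)) (g : α → α) :
    l.foldr (· ∘ ·) g = l.foldr (· ∘ ·) id ∘ g := by
  induction l with
  | nil => rfl
  | cons a l ih => simp [List.foldr_cons, ih]; rfl

lemma cast_ne_zero {n : ℕ} (k : ℕ) (h0 : 0 < k) (hk : k < n) : (k : ZMod n) ≠ 0 := by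
  intro h
  have := ZMod.val_cast_of_lt hk
  rw [h, ZMod.val_zero] at this
  omega

lemma eq_cast_iff {n : ℕ} [NeZero n] (j : ZMod n) (k : ℕ) (hk : k < n) :
    j = (k : ZMod n) ↔ j.val = k := by
  constructor
  · intro h; rw [h, ZMod.val_cast_of_lt hk]
  · intro h; apply ZMod.val_injective n; rw [ZMod.val_cast_of_lt hk]; exact h

lemma fold_eq {n : ℕ} (hn : Odd n) (h5 : 5 ≤ n)
    (β : ZMod n → ((ZMod n → ℝ) → (ZMod n → ℝ)))
    (hβ : ∀ i : ZMod n, i ≠ 0 →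
      β i = hwAffZ n (fun j => if j = i then 1 else -1)
        (fun j => if j = i ∨ j = i + 1 then 1/2 else 0)) :
    ∀ m, m ≤ n - 1 →
      ((List.range m).map (fun k => β ((k + 1 : ℕ) : ZMod n))).foldr (· ∘ ·) id
        = hwAffZ n (Dfun n m) (cfun n m) := by
  have hNZ : NeZero n := ⟨by omega⟩
  intro m
  induction m with
  | zero =>
    intro _
    funext x j
    simp only [List.range_zero, List.map_nil, List.foldr_nil, id, hwAffZ, Dfun, cfun]
    rw [if_neg (by rintro ⟨_, h⟩; omega : ¬ (j.val = 0 ∧ 0 = n - 1)),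
      if_neg (by rintro ⟨_, h⟩; omega : ¬ (j.val = 1 ∧ 1 ≤ 0)),
      if_neg (by rintro ⟨h, h'⟩; omega : ¬ (2 ≤ j.val ∧ j.val = 0 + 1)),
      if_neg (by rintro ⟨_, h⟩; omega : ¬ (j.val ≠ 0 ∧ j.val ≤ 0))]
    norm_num
  | succ m ih =>
    intro hm
    have hml : m ≤ n - 1 := by omega
    have hm1n : m + 1 < n := by omega
    rw [List.range_succ, List.map_append, List.foldr_append, List.map_singleton,
      List.foldr_cons, List.foldr_nil, foldr_comp, ih hml]
    have hi0 : ((m + 1 : ℕ) : ZMod n) ≠ 0 := cast_ne_zero (m + 1) (by omega) hm1n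
    rw [hβ _ hi0]
    funext x j
    have hjlt : j.val < n := ZMod.val_lt j
    have hEi : j = ((m + 1 : ℕ) : ZMod n) ↔ j.val = m + 1 := eq_cast_iff j (m + 1) hm1n
    have hi1 : ((m + 1 : ℕ) : ZMod n) + 1 = ((m + 2 : ℕ) : ZMod n) := by push_cast; ring
    have hEi1 : j = ((m + 1 : ℕ) : ZMod n) + 1 ↔ j.val = (m + 2) % n := by
      rw [hi1]
      constructor
      · intro h; rw [h, ZMod.val_natCast]
      · intro h; apply ZMod.val_injective n; rw [ZMod.val_natCast]; exact h
    simp only [Function.comp, hwAffZ, Dfun, cfun, hEi, hEi1, id_eq]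
    by_cases hA : j.val = m + 1
    · -- `j = i`
      have hnB : ¬ j.val = (m + 2) % n := by
        rcases Nat.lt_or_ge (m + 2) n with h | h
        · rw [Nat.mod_eq_of_lt h]; omega
        · have h2 : m + 2 = n := by omega
          rw [h2, Nat.mod_self]; omega
      rw [if_pos hA]
      rw [if_neg (by rintro ⟨_, h⟩; omega : ¬ (j.val ≠ 0 ∧ j.val ≤ m))]
      rw [if_pos (⟨by omega, by omega⟩ : j.val ≠ 0 ∧ j.val ≤ m + 1)]
      rw [if_pos (Or.inl hA)]
      rw [if_neg (by rintro ⟨h, _⟩; omega : ¬ (j.val = 0 ∧ m = n - 1))]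
      rw [if_neg (by rintro ⟨h, _⟩; omega : ¬ (j.val = 0 ∧ m + 1 = n - 1))]
      by_cases hm0 : m = 0
      · subst hm0
        rw [if_neg (by rintro ⟨_, h⟩; omega : ¬ (j.val = 1 ∧ 1 ≤ 0))]
        rw [if_neg (by rintro ⟨h, _⟩; omega : ¬ (2 ≤ j.val ∧ j.val = 0 + 1))]
        rw [if_pos (⟨by omega, by omega⟩ : j.val = 1 ∧ 1 ≤ 0 + 1)]
        norm_num
      · rw [if_neg (by rintro ⟨h, _⟩; omega : ¬ (j.val = 1 ∧ 1 ≤ m))]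
        rw [if_pos (⟨by omega, by omega⟩ : 2 ≤ j.val ∧ j.val = m + 1)]
        rw [if_neg (by rintro ⟨h, _⟩; omega : ¬ (j.val = 1 ∧ 1 ≤ m + 1))]
        rw [if_neg (by rintro ⟨_, h⟩; omega : ¬ (2 ≤ j.val ∧ j.val = m + 1 + 1))]
        simp only [pow_succ]; ring
    · rw [if_neg hA]
      by_cases hB : j.val = (m + 2) % n
      · rw [if_pos (Or.inr hB)]
        rcases Nat.lt_or_ge (m + 2) n with h | h
        · -- `j = i + 1`, no wrap-around: `j.val = m + 2`
          rw [Nat.mod_eq_of_lt h] at hB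
          rw [if_neg (by rintro ⟨_, h'⟩; omega : ¬ (j.val ≠ 0 ∧ j.val ≤ m))]
          rw [if_neg (by rintro ⟨_, h'⟩; omega : ¬ (j.val ≠ 0 ∧ j.val ≤ m + 1))]
          rw [if_neg (by rintro ⟨h', _⟩; omega : ¬ (j.val = 0 ∧ m = n - 1))]
          rw [if_neg (by rintro ⟨h', _⟩; omega : ¬ (j.val = 1 ∧ 1 ≤ m))]
          rw [if_neg (by rintro ⟨_, h'⟩; omega : ¬ (2 ≤ j.val ∧ j.val = m + 1))]
          rw [if_neg (by rintro ⟨h', _⟩; omega : ¬ (j.val = 0 ∧ m + 1 = n - 1))]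
          rw [if_neg (by rintro ⟨h', _⟩; omega : ¬ (j.val = 1 ∧ 1 ≤ m + 1))]
          rw [if_pos (⟨by omega, by omega⟩ : 2 ≤ j.val ∧ j.val = m + 1 + 1)]
          simp only [pow_succ]; ring
        · -- wrap-around: `m + 2 = n`, `j.val = 0`
          have h2 : m + 2 = n := by omega
          rw [h2, Nat.mod_self] at hB
          have hmo : Odd m := by rcases hn with ⟨k, hk⟩; exact ⟨k - 1, by omega⟩
          rw [if_neg (by rintro ⟨h', _⟩; omega : ¬ (j.val ≠ 0 ∧ j.val ≤ m))]
          rw [if_neg (by rintro ⟨h', _⟩; omega : ¬ (j.val ≠ 0 ∧ j.val ≤ m + 1))]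
          rw [if_neg (by rintro ⟨_, h'⟩; omega : ¬ (j.val = 0 ∧ m = n - 1))]
          rw [if_neg (by rintro ⟨h', _⟩; omega : ¬ (j.val = 1 ∧ 1 ≤ m))]
          rw [if_neg (by rintro ⟨h', _⟩; omega : ¬ (2 ≤ j.val ∧ j.val = m + 1))]
          rw [if_pos (⟨hB, by omega⟩ : j.val = 0 ∧ m + 1 = n - 1)]
          rw [Odd.neg_one_pow hmo, pow_succ, Odd.neg_one_pow hmo]
          ring
      · -- `j ≠ i`, `j ≠ i + 1`
        rw [if_neg (by rintro (h | h) <;> [exact hA h; exact hB h] :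
          ¬ (j.val = m + 1 ∨ j.val = (m + 2) % n))]
        have hDeq : (if j.val ≠ 0 ∧ j.val ≤ m then ((-1:ℝ))^(m+1) else (-1)^m) * -1
            = (if j.val ≠ 0 ∧ j.val ≤ m + 1 then ((-1:ℝ))^(m+1+1) else (-1)^(m+1)) := by
          by_cases hc : j.val ≠ 0 ∧ j.val ≤ m
          · rw [if_pos hc, if_pos (⟨hc.1, by omega⟩ : j.val ≠ 0 ∧ j.val ≤ m + 1)]
            rw [pow_succ]; ring
          · have hc' : ¬ (j.val ≠ 0 ∧ j.val ≤ m + 1) := by omega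
            rw [if_neg hc, if_neg hc', pow_succ]
        have hceq : (if j.val = 0 ∧ m = n - 1 then -(1/2 : ℝ)
              else if j.val = 1 ∧ 1 ≤ m then 1/2
              else if 2 ≤ j.val ∧ j.val = m + 1 then (-1)^(m+1)/2 else 0)
            = (if j.val = 0 ∧ m + 1 = n - 1 then -(1/2 : ℝ)
              else if j.val = 1 ∧ 1 ≤ m + 1 then 1/2
              else if 2 ≤ j.val ∧ j.val = m + 1 + 1 then (-1)^(m+1+1)/2 else 0) := by
        -- `j.val = 0 ∧ m + 1 = n - 1` would force `j.val = (m+2) % n`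
          have hw : ¬ (j.val = 0 ∧ m + 1 = n - 1) := by
            rintro ⟨h1, h2⟩
            apply hB
            have : m + 2 = n := by omega
            rw [this, Nat.mod_self]; exact h1
          have hw2 : ¬ (2 ≤ j.val ∧ j.val = m + 1 + 1) := by
            rintro ⟨_, h1⟩
            apply hB
            have hlt : m + 2 < n := by omega
            rw [Nat.mod_eq_of_lt hlt]; omega
          split_ifs <;> first | rfl | omega
        rw [← hDeq, ← hceq]
        ring

end HWaux

theorem stmt_12 (n : ℕ) (hn : Odd n) (h5 : 5 ≤ n)
    (β : ZMod n → ((ZMod n → ℝ) → (ZMod n → ℝ)))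
    -- for `1 ≤ i ≤ n-1`, `β_i = (B_i, b_i)` with `B_i` diagonal with `+1` only in
    -- position `i`, and `b_i` having `1/2` exactly in positions `i` and `i+1`
    (hβ : ∀ i : ZMod n, i ≠ 0 →
      β i = hwAffZ n (fun j => if j = i then 1 else -1)
        (fun j => if j = i ∨ j = i + 1 then 1/2 else 0))
    -- `β_n` (here indexed by `0 = n` in `ZMod n`) is the inverse of `β_1 ⋯ β_{n-1}`
    (hβ0l : β 0 ∘ (((List.range (n - 1)).map
        (fun k => β ((k + 1 : ℕ) : ZMod n))).foldr (· ∘ ·) id) = id)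
    (hβ0r : (((List.range (n - 1)).map
        (fun k => β ((k + 1 : ℕ) : ZMod n))).foldr (· ∘ ·) id) ∘ β 0 = id) :
    -- `(β_i)² = t_i`, the translation by the `i`-th standard basis vector, and
    -- `(β_i β_{i+2})² = t_{i+1} t_{i+3}⁻¹` (indices mod `n`)
    (∀ i : ZMod n, β i ∘ β i = fun x j => x j + if j = i then 1 else 0) ∧
    (∀ i : ZMod n, (β i ∘ β (i + 2)) ∘ (β i ∘ β (i + 2)) =
      fun x j => x j + (if j = i + 1 then 1 else 0) - (if j = i + 3 then 1 else 0)) := by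
  have hNZ : NeZero n := ⟨by omega⟩
  -- β 0 also has the canonical form
  have hfold := HWaux.fold_eq hn h5 β hβ (n - 1) le_rfl
  have hβ0 : β 0 = hwAffZ n (fun j => if j = (0 : ZMod n) then 1 else -1)
      (fun j => if j = 0 ∨ j = (0 : ZMod n) + 1 then 1/2 else 0) := by
    set g : (ZMod n → ℝ) → (ZMod n → ℝ) :=
      hwAffZ n (fun j => if j = (0 : ZMod n) then 1 else -1)
        (fun j => if j = 0 ∨ j = (0 : ZMod n) + 1 then 1/2 else 0) with hg
    have hgQ : g ∘ hwAffZ n (HWaux.Dfun n (n - 1)) (HWaux.cfun n (n - 1)) = id := by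
      funext x j
      have hjlt : j.val < n := ZMod.val_lt j
      have hE0 : j = (0 : ZMod n) ↔ j.val = 0 := by
        constructor
        · intro h; rw [h, ZMod.val_zero]
        · intro h; apply ZMod.val_injective n; rw [ZMod.val_zero]; exact h
      have hE1 : j = (0 : ZMod n) + 1 ↔ j.val = 1 := by
        rw [zero_add]
        have : (1 : ZMod n) = ((1 : ℕ) : ZMod n) := by norm_num
        rw [this]
        exact HWaux.eq_cast_iff j 1 (by omega)
      have hne : (-1 : ℝ)^(n-1) = 1 := by
        apply Even.neg_one_pow
        rcases hn with ⟨k, hk⟩; exact ⟨k, by omega⟩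
      have hne2 : (-1 : ℝ)^(n-1+1) = -1 := by rw [pow_succ, hne]; ring
      simp only [hg, Function.comp, hwAffZ, HWaux.Dfun, HWaux.cfun, hE0, hE1, id_eq]
      simp only [eq_self_iff_true, and_true]
      split_ifs <;> first | omega | (simp only [hne, hne2]; ring)
    calc β 0 = id ∘ β 0 := rfl
      _ = (g ∘ hwAffZ n (HWaux.Dfun n (n - 1)) (HWaux.cfun n (n - 1))) ∘ β 0 := by
          rw [hgQ]
      _ = g ∘ (((List.range (n - 1)).map
            (fun k => β ((k + 1 : ℕ) : ZMod n))).foldr (· ∘ ·) id ∘ β 0) := by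
          rw [hfold]; rfl
      _ = g := by rw [hβ0r]; rfl
  have hβall : ∀ i : ZMod n,
      β i = hwAffZ n (fun j => if j = i then 1 else -1)
        (fun j => if j = i ∨ j = i + 1 then 1/2 else 0) := by
    intro i
    by_cases hi : i = 0
    · subst hi; exact hβ0
    · exact hβ i hi
  have hkey : ∀ k : ℕ, 0 < k → k < n → ((k : ℕ) : ZMod n) ≠ 0 := fun k h0 hk =>
    HWaux.cast_ne_zero k h0 hk
  have h1 : (1 : ZMod n) ≠ 0 := by
    have := hkey 1 (by omega) (by omega); simpa using this
  have h2 : (2 : ZMod n) ≠ 0 := by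
    have := hkey 2 (by omega) (by omega); push_cast at this; exact this
  have h3 : (3 : ZMod n) ≠ 0 := by
    have := hkey 3 (by omega) (by omega); push_cast at this; exact this
  have hd : ∀ a b : ℕ, a < n → b < n → a ≠ b → ((a : ℕ) : ZMod n) ≠ ((b : ℕ) : ZMod n) := by
    intro a b ha hb hab h
    have := congrArg ZMod.val h
    rw [ZMod.val_cast_of_lt ha, ZMod.val_cast_of_lt hb] at this
    exact hab this
  have d12 : (1 : ZMod n) ≠ 2 := by
    have := hd 1 2 (by omega) (by omega) (by omega); push_cast at this; exact this
  have d13 : (1 : ZMod n) ≠ 3 := by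
    have := hd 1 3 (by omega) (by omega) (by omega); push_cast at this; exact this
  have d23 : (2 : ZMod n) ≠ 3 := by
    have := hd 2 3 (by omega) (by omega) (by omega); push_cast at this; exact this
  have d21 := d12.symm
  have d31 := d13.symm
  have d32 := d23.symm
  have h1' := h1.symm
  have h2' := h2.symm
  have h3' := h3.symm
  have hcan : ∀ (i : ZMod n) (c : ZMod n), c ≠ 0 → i + c ≠ i := by
    intro i c hc h
    apply hc
    have h' : i + c = i + 0 := by rw [add_zero]; exact h
    exact add_left_cancel h'
  constructor
  · intro i
    rw [hβall i]
    funext x j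
    simp only [Function.comp, hwAffZ]
    by_cases hji : j = i
    · have h' : ¬ j = i + 1 := by rw [hji]; exact fun h => hcan i 1 h1 h.symm
      simp [hji, h', h1]
      ring
    · by_cases hji1 : j = i + 1 <;> simp [hji, hji1, h1] <;> ring
  · intro i
    rw [hβall i, hβall (i + 2)]
    have h23 : i + 2 + 1 = i + 3 := by ring
    funext x j
    simp only [Function.comp, hwAffZ, h23]
    have c12 : i + 1 ≠ i + 2 := by
      intro h
      exact hcan (i + 1) 1 h1 (by rw [show i + 1 + 1 = i + 2 from by ring, ← h])
    have c13 : i + 1 ≠ i + 3 := by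
      intro h
      exact hcan (i + 1) 2 h2 (by rw [show i + 1 + 2 = i + 3 from by ring, ← h])
    have c23 : i + 2 ≠ i + 3 := by
      intro h
      exact hcan (i + 2) 1 h1 (by rw [show i + 2 + 1 = i + 3 from by ring, ← h])
    have c01 : i ≠ i + 1 := fun h => hcan i 1 h1 h.symm
    have c02 : i ≠ i + 2 := fun h => hcan i 2 h2 h.symm
    have c03 : i ≠ i + 3 := fun h => hcan i 3 h3 h.symm
    by_cases hj0 : j = i
    · have n1 : ¬ j = i + 1 := by rw [hj0]; exact c01
      have n2 : ¬ j = i + 2 := by rw [hj0]; exact c02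
      have n3 : ¬ j = i + 3 := by rw [hj0]; exact c03
      simp [hj0, n1, n2, n3, c01, c02, c03, h1, h2, h3, d12, d13, d23, d21, d31, d32, h1', h2', h3']
      try ring
    · by_cases hj1 : j = i + 1
      · have n2 : ¬ j = i + 2 := by rw [hj1]; exact c12
        have n3 : ¬ j = i + 3 := by rw [hj1]; exact c13
        simp [hj0, hj1, n2, n3, h1, h2, h3, d12, d13, d23, d21, d31, d32, h1', h2', h3']
        try ring
      · by_cases hj2 : j = i + 2
        · have n3 : ¬ j = i + 3 := by rw [hj2]; exact c23
          simp [hj0, hj1, hj2, n3, h1, h2, h3, d12, d13, d23, d21, d31, d32, h1', h2', h3']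
          try ring
        · by_cases hj3 : j = i + 3 <;> simp [hj0, hj1, hj2, hj3, h1, h2, h3, d12, d13, d23, d21, d31, d32, h1', h2', h3'] <;> try ring
end
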